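/- arXiv:2507.08186 — 3 statements merged into one kernel-verified Lean document; each statement's English description precedes it below -/
import Mathlib

section
/- Let (X,μ,T,α) be a Gibbs–Markov map with full branches, G a countable discrete group, and ψ:X→G constant on each element of α. Fix g∈G, assume condition (D) holds at g, and assume μ^n(g):=μ({x:ψ_n(x)=g})>0 for all sufficiently large n. For u∈α_k and such n, define m_n^g(u) = (1/μ^n(g)) · ∑_{a∈α_n, a⊆u, ψ_n(a)=g} μ(a). Then m_n^g(u) → μ(u) as n→∞, for every k∈ℕ and every u∈α_k. -/
open MeasureTheory Filter Topology Set
open scoped ENNReal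

noncomputable section

/-- The cocycle `ψ_n(x) = ψ(T^{n-1} x) ⋯ ψ(T x) · ψ(x)` driven by `T`. -/
def cocycle {X G : Type*} [Monoid G] (T : X → X) (ψ : X → G) : ℕ → X → G
  | 0, _ => 1
  | n + 1, x => ψ (T^[n] x) * cocycle T ψ n x

/-- The collection `α_n` of (nonempty) `n`-cylinders `⋂_{j<n} T^{-j} a_j`, `a_j ∈ α`. -/
def cylinders {X : Type*} (T : X → X) (α : Set (Set X)) (n : ℕ) : Set (Set X) :=
  {c | c.Nonempty ∧ ∃ a : Fin n → Set X, (∀ j, a j ∈ α) ∧ c = ⋂ j : Fin n, T^[(j : ℕ)] ⁻¹' a j}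

/-- Birkhoff (ergodic) sums `φ_n = ∑_{j<n} φ ∘ T^j`. -/
def birkhoff {X : Type*} (T : X → X) (φ : X → ℝ) (n : ℕ) (x : X) : ℝ :=
  ∑ j ∈ Finset.range n, φ (T^[j] x)

/-- A Gibbs–Markov map with full branches: `μ` a Borel probability measure, `T`
measure-preserving, ergodic and topologically mixing, Markov with full branches for the
countable partition `α`, with big images, and a potential `φ` (the log Jacobian
`log dμ/d(μ∘T)`) that is locally Hölder (w.r.t. the separation metric, expressed through
cylinders) and has the Gibbs property. -/
structure IsGibbsMarkov {X : Type*} [MetricSpace X] [MeasurableSpace X]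
    (μ : Measure X) (T : X → X) (α : Set (Set X)) (φ : X → ℝ) : Prop where
  prob : IsProbabilityMeasure μ
  measurable_T : Measurable T
  measurePreserving : MeasurePreserving T μ μ
  ergodic : Ergodic T μ
  topMixing : ∀ U V : Set X, IsOpen U → IsOpen V → U.Nonempty → V.Nonempty →
    ∃ N, ∀ n ≥ N, (U ∩ T^[n] ⁻¹' V).Nonempty
  countable : α.Countable
  measurableSet : ∀ a ∈ α, MeasurableSet a
  nonempty : ∀ a ∈ α, a.Nonempty
  pairwiseDisjoint : α.PairwiseDisjoint id
  cover : ⋃₀ α = univ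
  fullBranches : ∀ a ∈ α, Set.BijOn T a univ
  bigImages : ∃ c : ℝ≥0∞, 0 < c ∧ ∀ a ∈ α, c ≤ μ (T '' a)
  holder : ∃ C > (0 : ℝ), ∃ β ∈ Set.Ioo (0 : ℝ) 1, ∀ n, ∀ c ∈ cylinders T α n,
    ∀ x ∈ c, ∀ y ∈ c, |φ x - φ y| ≤ C * β ^ n
  gibbs : ∃ C > (0 : ℝ), ∀ n : ℕ, ∀ c ∈ cylinders T α (n + 1), ∀ x ∈ c,
    (μ c).toReal / C ≤ Real.exp (birkhoff T φ (n + 1) x) ∧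
    Real.exp (birkhoff T φ (n + 1) x) ≤ C * (μ c).toReal

/-- Condition (D) at `g ∈ G`. -/
def CondD {X G : Type*} [MeasurableSpace X] [Group G]
    (μ : Measure X) (T : X → X) (α : Set (Set X)) (ψ : X → G) (g : G) : Prop :=
  ∀ ε > (0 : ℝ), ∀ n₀ : ℕ, ∃ n₁ > n₀, ∀ n ≥ n₁, ∃ n' ∈ Set.Icc n₀ n₁,
    ∀ b ∈ cylinders T α n',
      (μ {x | cocycle T ψ n x = g}).toReal / (1 + ε) ≤
          (μ (b ∩ {x | cocycle T ψ n x = g})).toReal / (μ b).toReal ∧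
      (μ (b ∩ {x | cocycle T ψ n x = g})).toReal / (μ b).toReal ≤
          (1 + ε) * (μ {x | cocycle T ψ n x = g}).toReal

/-- The mass `m_n^g(u) = (1/μ^n(g)) ∑_{a ∈ α_n, a ⊆ u, ψ_n(a) = g} μ(a)`. -/
def mng {X G : Type*} [MeasurableSpace X] [Group G]
    (μ : Measure X) (T : X → X) (α : Set (Set X)) (ψ : X → G)
    (g : G) (n : ℕ) (u : Set X) : ℝ :=
  (∑' a : {a : Set X // a ∈ cylinders T α n ∧ a ⊆ u ∧ ∀ x ∈ a, cocycle T ψ n x = g},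
      μ (a : Set X)).toReal / (μ {x | cocycle T ψ n x = g}).toReal

section Aux

variable {X : Type*} [MeasurableSpace X] {T : X → X} {α : Set (Set X)}

lemma mem_of_mem_iInter {n : ℕ} {a : Fin n → Set X} {x : X}
    (hx : x ∈ ⋂ j : Fin n, T^[(j : ℕ)] ⁻¹' a j) (j : Fin n) : T^[(j : ℕ)] x ∈ a j := by
  simpa using Set.mem_iInter.mp hx j

lemma alpha_eq_of_mem (hdisj : α.PairwiseDisjoint id) {a b : Set X} (ha : a ∈ α) (hb : b ∈ α)
    {x : X} (hxa : x ∈ a) (hxb : x ∈ b) : a = b := by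
  by_contra h
  exact (Set.disjoint_left.mp (hdisj ha hb h) hxa) hxb

lemma cylinders_countable (hα : α.Countable) (n : ℕ) : (cylinders T α n).Countable := by
  haveI := hα.to_subtype
  have : cylinders T α n ⊆
      Set.range (fun a : Fin n → α => ⋂ j : Fin n, T^[(j : ℕ)] ⁻¹' (a j : Set X)) := by
    rintro c ⟨-, a, ha, rfl⟩
    exact ⟨fun j => ⟨a j, ha j⟩, rfl⟩
  exact (Set.countable_range _).mono this

lemma cylinders_measurable (hT : Measurable T) (hmeas : ∀ a ∈ α, MeasurableSet a)
    {n : ℕ} {c : Set X} (hc : c ∈ cylinders T α n) : MeasurableSet c := by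
  obtain ⟨-, a, ha, rfl⟩ := hc
  exact MeasurableSet.iInter fun j => (hmeas (a j) (ha j)).preimage (hT.iterate _)

lemma cylinders_disjoint (hdisj : α.PairwiseDisjoint id) (n : ℕ) :
    (cylinders T α n).PairwiseDisjoint id := by
  rintro c hc c' hc' hne
  obtain ⟨-, a, ha, rfl⟩ := hc
  obtain ⟨-, a', ha', rfl⟩ := hc'
  by_contra hnd
  obtain ⟨x, hx, hx'⟩ := Set.not_disjoint_iff.mp hnd
  have : a = a' := funext fun j =>
    alpha_eq_of_mem hdisj (ha j) (ha' j) (mem_of_mem_iInter hx j) (mem_of_mem_iInter hx' j)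
  exact hne (by rw [this])

lemma cylinders_exists_mem (hcover : ⋃₀ α = univ) (n : ℕ) (x : X) :
    ∃ c ∈ cylinders T α n, x ∈ c := by
  have h : ∀ j : Fin n, ∃ a ∈ α, T^[(j : ℕ)] x ∈ a := by
    intro j
    have : T^[(j : ℕ)] x ∈ ⋃₀ α := hcover ▸ Set.mem_univ _
    exact Set.mem_sUnion.mp this
  choose a ha hxa using h
  have hx : x ∈ ⋂ j : Fin n, T^[(j : ℕ)] ⁻¹' a j := Set.mem_iInter.mpr fun j => hxa j
  exact ⟨_, ⟨⟨x, hx⟩, a, ha, rfl⟩, hx⟩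

lemma cylinders_subset_of_mem (hdisj : α.PairwiseDisjoint id) {k n : ℕ} (hkn : k ≤ n)
    {u c : Set X} (hu : u ∈ cylinders T α k) (hc : c ∈ cylinders T α n)
    {x : X} (hxc : x ∈ c) (hxu : x ∈ u) : c ⊆ u := by
  obtain ⟨-, b, hb, rfl⟩ := hu
  obtain ⟨-, a, ha, rfl⟩ := hc
  intro y hy
  refine Set.mem_iInter.mpr fun j => ?_
  have hj : (j : ℕ) < n := lt_of_lt_of_le j.2 hkn
  have hab : a ⟨(j : ℕ), hj⟩ = b j :=
    alpha_eq_of_mem hdisj (ha _) (hb _) (mem_of_mem_iInter hxc ⟨(j : ℕ), hj⟩)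
      (mem_of_mem_iInter hxu j)
  exact hab ▸ mem_of_mem_iInter hy ⟨(j : ℕ), hj⟩

variable {G : Type*} [Group G] {ψ : X → G}

lemma cocycle_const (hψ : ∀ a ∈ α, ∀ x ∈ a, ∀ y ∈ a, ψ x = ψ y)
    {n : ℕ} {c : Set X} (hc : c ∈ cylinders T α n) {x y : X} (hx : x ∈ c) (hy : y ∈ c) :
    cocycle T ψ n x = cocycle T ψ n y := by
  obtain ⟨-, a, ha, rfl⟩ := hc
  suffices h : ∀ m, m ≤ n → cocycle T ψ m x = cocycle T ψ m y from h n le_rfl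
  intro m
  induction m with
  | zero => intro _; rfl
  | succ m ih =>
    intro hm
    have hmn : m < n := hm
    have h1 : ψ (T^[m] x) = ψ (T^[m] y) :=
      hψ _ (ha ⟨m, hmn⟩) _ (mem_of_mem_iInter hx ⟨m, hmn⟩) _ (mem_of_mem_iInter hy ⟨m, hmn⟩)
    show ψ (T^[m] x) * cocycle T ψ m x = ψ (T^[m] y) * cocycle T ψ m y
    rw [h1, ih (le_of_lt hmn)]

lemma cyl_subset_S (hψ : ∀ a ∈ α, ∀ x ∈ a, ∀ y ∈ a, ψ x = ψ y) {g : G}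
    {n : ℕ} {c : Set X} (hc : c ∈ cylinders T α n) {x : X} (hx : x ∈ c)
    (hxS : cocycle T ψ n x = g) : c ⊆ {y | cocycle T ψ n y = g} := by
  intro y hy
  have := cocycle_const hψ hc hy hx
  simpa [Set.mem_setOf_eq, this] using hxS

lemma measurableSet_S (hT : Measurable T) (hα : α.Countable)
    (hmeas : ∀ a ∈ α, MeasurableSet a) (hcover : ⋃₀ α = univ)
    (hψ : ∀ a ∈ α, ∀ x ∈ a, ∀ y ∈ a, ψ x = ψ y) (g : G) (n : ℕ) :
    MeasurableSet {x | cocycle T ψ n x = g} := by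
  set S := {x | cocycle T ψ n x = g} with hS
  have hU : S = ⋃₀ {c | c ∈ cylinders T α n ∧ c ⊆ S} := by
    apply Set.Subset.antisymm
    · intro x hx
      obtain ⟨c, hc, hxc⟩ := cylinders_exists_mem (T := T) hcover n x
      exact ⟨c, ⟨hc, cyl_subset_S hψ hc hxc hx⟩, hxc⟩
    · rintro x ⟨c, ⟨-, hcS⟩, hxc⟩
      exact hcS hxc
  rw [hU]
  exact MeasurableSet.sUnion
    (((cylinders_countable hα n).mono (fun c hc => hc.1)).mono (fun c hc => hc))
    (fun c hc => cylinders_measurable hT hmeas hc.1)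

lemma iUnion_cyl_subset_eq (hdisj : α.PairwiseDisjoint id) (hcover : ⋃₀ α = univ)
    {k m : ℕ} (hkm : k ≤ m) {u : Set X} (hu : u ∈ cylinders T α k) :
    ⋃ b : {b : Set X // b ∈ cylinders T α m ∧ b ⊆ u}, (b : Set X) = u := by
  apply Set.Subset.antisymm
  · exact Set.iUnion_subset fun b => b.2.2
  · intro x hx
    obtain ⟨c, hc, hxc⟩ := cylinders_exists_mem (T := T) hcover m x
    exact Set.mem_iUnion.mpr ⟨⟨c, hc, cylinders_subset_of_mem hdisj hkm hu hc hxc hx⟩, hxc⟩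

lemma countable_subtype_cyl (hα : α.Countable) {m : ℕ} (P : Set X → Prop)
    (hP : ∀ b, P b → b ∈ cylinders T α m) : Countable {b : Set X // P b} := by
  have : Set.Countable {b : Set X | P b} :=
    (cylinders_countable (T := T) hα m).mono (fun b hb => hP b hb)
  exact this.to_subtype

lemma measure_u_inter (μ : Measure X) (hT : Measurable T) (hα : α.Countable)
    (hmeas : ∀ a ∈ α, MeasurableSet a) (hdisj : α.PairwiseDisjoint id)
    (hcover : ⋃₀ α = univ) {k m : ℕ} (hkm : k ≤ m) {u : Set X} (hu : u ∈ cylinders T α k)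
    {S : Set X} (hS : MeasurableSet S) :
    μ (u ∩ S) = ∑' b : {b : Set X // b ∈ cylinders T α m ∧ b ⊆ u}, μ ((b : Set X) ∩ S) := by
  haveI : Countable {b : Set X // b ∈ cylinders T α m ∧ b ⊆ u} :=
    countable_subtype_cyl (T := T) hα _ (fun b hb => hb.1)
  have h1 : u ∩ S = ⋃ b : {b : Set X // b ∈ cylinders T α m ∧ b ⊆ u}, ((b : Set X) ∩ S) := by
    rw [← Set.iUnion_inter, iUnion_cyl_subset_eq (T := T) hdisj hcover hkm hu]
  rw [h1]
  refine measure_iUnion ?_ ?_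
  · intro i j hij
    have hne : (i : Set X) ≠ (j : Set X) := fun h => hij (Subtype.ext h)
    exact ((cylinders_disjoint hdisj m) i.2.1 j.2.1 hne).mono Set.inter_subset_left
      Set.inter_subset_left
  · exact fun b => (cylinders_measurable hT hmeas b.2.1).inter hS

lemma measure_u_eq (μ : Measure X) (hT : Measurable T) (hα : α.Countable)
    (hmeas : ∀ a ∈ α, MeasurableSet a) (hdisj : α.PairwiseDisjoint id)
    (hcover : ⋃₀ α = univ) {k m : ℕ} (hkm : k ≤ m) {u : Set X} (hu : u ∈ cylinders T α k) :
    μ u = ∑' b : {b : Set X // b ∈ cylinders T α m ∧ b ⊆ u}, μ (b : Set X) := by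
  have := measure_u_inter (T := T) μ hT hα hmeas hdisj hcover hkm hu MeasurableSet.univ
  simpa using this

lemma tsum_numerator (μ : Measure X) (hT : Measurable T) (hα : α.Countable)
    (hmeas : ∀ a ∈ α, MeasurableSet a) (hdisj : α.PairwiseDisjoint id)
    (hcover : ⋃₀ α = univ) (hψ : ∀ a ∈ α, ∀ x ∈ a, ∀ y ∈ a, ψ x = ψ y) (g : G)
    {k n : ℕ} (hkn : k ≤ n) {u : Set X} (hu : u ∈ cylinders T α k) :
    (∑' a : {a : Set X // a ∈ cylinders T α n ∧ a ⊆ u ∧ ∀ x ∈ a, cocycle T ψ n x = g},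
      μ (a : Set X)) = μ (u ∩ {x | cocycle T ψ n x = g}) := by
  set S := {x | cocycle T ψ n x = g} with hSdef
  haveI : Countable {a : Set X // a ∈ cylinders T α n ∧ a ⊆ u ∧ ∀ x ∈ a, cocycle T ψ n x = g} :=
    countable_subtype_cyl (T := T) hα _ (fun a ha => ha.1)
  have hUnion : (⋃ a : {a : Set X // a ∈ cylinders T α n ∧ a ⊆ u ∧
      ∀ x ∈ a, cocycle T ψ n x = g}, (a : Set X)) = u ∩ S := by
    apply Set.Subset.antisymm
    · refine Set.iUnion_subset fun a => ?_
      intro x hx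
      exact ⟨a.2.2.1 hx, a.2.2.2 x hx⟩
    · rintro x ⟨hxu, hxS⟩
      obtain ⟨c, hc, hxc⟩ := cylinders_exists_mem (T := T) hcover n x
      have hcu : c ⊆ u := cylinders_subset_of_mem hdisj hkn hu hc hxc hxu
      have hcS : ∀ y ∈ c, cocycle T ψ n y = g := fun y hy => cyl_subset_S hψ hc hxc hxS hy
      exact Set.mem_iUnion.mpr ⟨⟨c, hc, hcu, hcS⟩, hxc⟩
  rw [← hUnion]
  refine (measure_iUnion ?_ ?_).symm
  · intro i j hij
    have hne : (i : Set X) ≠ (j : Set X) := fun h => hij (Subtype.ext h)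
    exact (cylinders_disjoint hdisj n) i.2.1 j.2.1 hne
  · exact fun a => cylinders_measurable hT hmeas a.2.1

end Aux

/-- Under condition (D) at `g` and eventual positivity of `μ^n(g)`,
the measures `m_n^g` of any cylinder `u` converge to `μ(u)`. -/
theorem mng_tendsto_discrete
    {X : Type*} [MetricSpace X] [MeasurableSpace X] [BorelSpace X]
    {G : Type*} [Group G] [Countable G]
    {μ : Measure X} {T : X → X} {α : Set (Set X)} {φ : X → ℝ}
    (hGM : IsGibbsMarkov μ T α φ)
    {ψ : X → G}
    (hψconst : ∀ a ∈ α, ∀ x ∈ a, ∀ y ∈ a, ψ x = ψ y)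
    (g : G) (hD : CondD μ T α ψ g)
    (hgpos : ∃ N : ℕ, ∀ n ≥ N, 0 < μ {x | cocycle T ψ n x = g}) :
    ∀ k : ℕ, ∀ u ∈ cylinders T α k,
      Tendsto (fun n : ℕ => mng μ T α ψ g n u) atTop (𝓝 (μ u).toReal) := by
  obtain ⟨N, hN⟩ := hgpos
  haveI := hGM.prob
  intro k u hu
  rw [Metric.tendsto_atTop]
  intro δ hδ
  set ε := δ / 2 with hεdef
  have hεpos : 0 < ε := by positivity
  have h1ε : (0:ℝ) < 1 + ε := by linarith
  obtain ⟨n₁, hn₁k, hDn⟩ := hD ε hεpos k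
  refine ⟨max n₁ N, fun n hn => ?_⟩
  have hnn₁ : n₁ ≤ n := le_trans (le_max_left _ _) hn
  have hnN : N ≤ n := le_trans (le_max_right _ _) hn
  have hkn : k ≤ n := le_trans (le_of_lt hn₁k) hnn₁
  set S := {x | cocycle T ψ n x = g} with hSdef
  have hSmeas : MeasurableSet S := measurableSet_S hGM.measurable_T hGM.countable
    hGM.measurableSet hGM.cover hψconst g n
  have hMpos : 0 < μ S := hN n hnN
  have hMfin : μ S ≠ ∞ := measure_ne_top μ S
  have hMr : 0 < (μ S).toReal := ENNReal.toReal_pos hMpos.ne' hMfin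
  obtain ⟨n', hn'Icc, hDb⟩ := hDn n hnn₁
  simp only [← hSdef] at hDb
  have hkn' : k ≤ n' := hn'Icc.1
  -- per-cylinder bounds in ℝ≥0∞
  have hperbU : ∀ b : {b : Set X // b ∈ cylinders T α n' ∧ b ⊆ u},
      μ ((b : Set X) ∩ S) ≤ ENNReal.ofReal (1 + ε) * μ S * μ (b : Set X) := by
    rintro ⟨b, hb⟩
    have hD2 := (hDb b hb.1).2
    have hbfin : μ b ≠ ∞ := measure_ne_top μ b
    by_cases hb0 : μ b = 0
    · have hQ0 : μ (b ∩ S) = 0 :=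
        le_antisymm (le_trans (measure_mono Set.inter_subset_left) hb0.le) zero_le
      simp [hQ0]
    · have hbr : 0 < (μ b).toReal := ENNReal.toReal_pos hb0 hbfin
      rw [div_le_iff₀ hbr] at hD2
      have hreal : (μ (b ∩ S)).toReal ≤ (1 + ε) * (μ S).toReal * (μ b).toReal := by
        nlinarith [hD2]
      have h1 : μ (b ∩ S) ≤ ENNReal.ofReal ((1 + ε) * (μ S).toReal * (μ b).toReal) := by
        rw [← ENNReal.ofReal_toReal (measure_ne_top μ (b ∩ S))]
        exact ENNReal.ofReal_le_ofReal hreal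
      refine h1.trans (le_of_eq ?_)
      rw [ENNReal.ofReal_mul (by positivity), ENNReal.ofReal_mul (by positivity),
        ENNReal.ofReal_toReal hMfin, ENNReal.ofReal_toReal hbfin]
  have hperbL : ∀ b : {b : Set X // b ∈ cylinders T α n' ∧ b ⊆ u},
      μ S * μ (b : Set X) ≤ ENNReal.ofReal (1 + ε) * μ ((b : Set X) ∩ S) := by
    rintro ⟨b, hb⟩
    have hD1 := (hDb b hb.1).1
    have hbfin : μ b ≠ ∞ := measure_ne_top μ b
    by_cases hb0 : μ b = 0
    · simp [hb0]
    · have hbr : 0 < (μ b).toReal := ENNReal.toReal_pos hb0 hbfin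
      rw [div_le_div_iff₀ h1ε hbr] at hD1
      have hreal : (μ S).toReal * (μ b).toReal ≤ (1 + ε) * (μ (b ∩ S)).toReal := by
        nlinarith [hD1]
      calc μ S * μ b = ENNReal.ofReal ((μ S).toReal * (μ b).toReal) := by
            rw [ENNReal.ofReal_mul ENNReal.toReal_nonneg, ENNReal.ofReal_toReal hMfin,
              ENNReal.ofReal_toReal hbfin]
        _ ≤ ENNReal.ofReal ((1 + ε) * (μ (b ∩ S)).toReal) := ENNReal.ofReal_le_ofReal hreal
        _ = ENNReal.ofReal (1 + ε) * μ (b ∩ S) := by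
            rw [ENNReal.ofReal_mul (by positivity),
              ENNReal.ofReal_toReal (measure_ne_top μ (b ∩ S))]
  -- summed bounds
  have hmuiS := measure_u_inter (T := T) μ hGM.measurable_T hGM.countable hGM.measurableSet
    hGM.pairwiseDisjoint hGM.cover hkn' hu hSmeas
  have hmuu := measure_u_eq (T := T) μ hGM.measurable_T hGM.countable hGM.measurableSet
    hGM.pairwiseDisjoint hGM.cover hkn' hu
  have hsumU : μ (u ∩ S) ≤ ENNReal.ofReal (1 + ε) * μ S * μ u := by
    calc μ (u ∩ S) = ∑' b : {b : Set X // b ∈ cylinders T α n' ∧ b ⊆ u},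
          μ ((b : Set X) ∩ S) := hmuiS
      _ ≤ ∑' b : {b : Set X // b ∈ cylinders T α n' ∧ b ⊆ u},
          ENNReal.ofReal (1 + ε) * μ S * μ (b : Set X) := ENNReal.tsum_le_tsum hperbU
      _ = ENNReal.ofReal (1 + ε) * μ S *
          ∑' b : {b : Set X // b ∈ cylinders T α n' ∧ b ⊆ u}, μ (b : Set X) :=
            ENNReal.tsum_mul_left
      _ = ENNReal.ofReal (1 + ε) * μ S * μ u := by rw [← hmuu]
  have hsumL : μ S * μ u ≤ ENNReal.ofReal (1 + ε) * μ (u ∩ S) := by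
    calc μ S * μ u = μ S *
          ∑' b : {b : Set X // b ∈ cylinders T α n' ∧ b ⊆ u}, μ (b : Set X) := by rw [← hmuu]
      _ = ∑' b : {b : Set X // b ∈ cylinders T α n' ∧ b ⊆ u}, μ S * μ (b : Set X) :=
            ENNReal.tsum_mul_left.symm
      _ ≤ ∑' b : {b : Set X // b ∈ cylinders T α n' ∧ b ⊆ u},
          ENNReal.ofReal (1 + ε) * μ ((b : Set X) ∩ S) := ENNReal.tsum_le_tsum hperbL
      _ = ENNReal.ofReal (1 + ε) * μ (u ∩ S) := by rw [ENNReal.tsum_mul_left, ← hmuiS]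
  -- pass to real numbers
  set Qr := (μ (u ∩ S)).toReal with hQrdef
  set Mr := (μ S).toReal with hMrdef
  set Ur := (μ u).toReal with hUrdef
  have hQfin : μ (u ∩ S) ≠ ∞ := measure_ne_top _ _
  have hUfin : μ u ≠ ∞ := measure_ne_top _ _
  have hQUB : Qr ≤ (1 + ε) * Mr * Ur := by
    have h := ENNReal.toReal_mono (by finiteness) hsumU
    rwa [ENNReal.toReal_mul, ENNReal.toReal_mul, ENNReal.toReal_ofReal (by positivity)] at h
  have hQLB : Mr * Ur ≤ (1 + ε) * Qr := by
    have h := ENNReal.toReal_mono (by finiteness) hsumL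
    rwa [ENNReal.toReal_mul, ENNReal.toReal_mul, ENNReal.toReal_ofReal (by positivity)] at h
  have hmng : mng μ T α ψ g n u = Qr / Mr := by
    unfold mng
    rw [tsum_numerator (T := T) μ hGM.measurable_T hGM.countable hGM.measurableSet
      hGM.pairwiseDisjoint hGM.cover hψconst g hkn hu]
  have hUr1 : Ur ≤ 1 := by
    have h : μ u ≤ 1 := prob_le_one
    simpa using ENNReal.toReal_mono (by norm_num) h
  have hUrnn : 0 ≤ Ur := ENNReal.toReal_nonneg
  -- squeeze
  have hupper : Qr / Mr ≤ (1 + ε) * Ur := by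
    rw [div_le_iff₀ hMr]
    nlinarith [hQUB]
  have hlower : Ur / (1 + ε) ≤ Qr / Mr := by
    rw [div_le_div_iff₀ h1ε hMr]
    nlinarith [hQLB]
  have hlow2 : Ur - ε ≤ Ur / (1 + ε) := by
    rw [le_div_iff₀ h1ε]
    nlinarith [hUr1, hεpos, hUrnn]
  rw [Real.dist_eq, hmng]
  have habs : |Qr / Mr - Ur| ≤ ε := by
    apply abs_le.mpr
    constructor
    · linarith [hlower, hlow2]
    · nlinarith [hupper, hUr1, hεpos]
  linarith [habs]
end
end

section
/- Let (X,μ,T,α) be a Gibbs–Markov map with full branches, let G be a finite group with identity e, and let ψ:X→G be constant on each element of α and such that for every g∈G there exists n∈ℕ with μ({x∈X : ψ_n(x)=g})>0. Define the return time τ(x)=min{ j>0 : ψ_j(x)=e }. Then τ has exponential tails: there exist C'>0 and λ'∈(0,1) such that μ({x∈X : τ(x)>n}) ≤ C'·(λ')^n for all n∈ℕ. -/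
open MeasureTheory Filter Topology Set
open scoped ENNReal

noncomputable section

/-! ### Auxiliary lemmas -/

section Aux

/-- The canonical `n`-cylinder around `x`, given a choice `E z` of partition element
containing each `z`. -/
def cylOf {X : Type*} (T : X → X) (E : X → Set X) (n : ℕ) (x : X) : Set X :=
  ⋂ j : Fin n, T^[(j : ℕ)] ⁻¹' E (T^[(j : ℕ)] x)

lemma cocycle_succ' {X G : Type*} [Monoid G] (T : X → X) (ψ : X → G) (n : ℕ) (x : X) :
    cocycle T ψ (n + 1) x = ψ (T^[n] x) * cocycle T ψ n x := rfl

lemma cocycle_add {X G : Type*} [Monoid G] (T : X → X) (ψ : X → G) (n m : ℕ) (x : X) :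
    cocycle T ψ (n + m) x = cocycle T ψ m (T^[n] x) * cocycle T ψ n x := by
  induction m with
  | zero => simp [cocycle]
  | succ m ih =>
      have h1 : n + (m + 1) = (n + m) + 1 := rfl
      rw [h1, cocycle_succ', ih, cocycle_succ', ← Function.iterate_add_apply,
        Nat.add_comm m n, mul_assoc]

lemma birkhoff_add {X : Type*} (T : X → X) (φ : X → ℝ) (n m : ℕ) (x : X) :
    birkhoff T φ (n + m) x = birkhoff T φ n x + birkhoff T φ m (T^[n] x) := by
  induction m with
  | zero => simp [birkhoff]
  | succ m ih =>
      have h1 : n + (m + 1) = (n + m) + 1 := rfl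
      unfold birkhoff at *
      rw [h1, Finset.sum_range_succ, ih, Finset.sum_range_succ,
        ← Function.iterate_add_apply, Nat.add_comm m n, add_assoc]

lemma cocycle_congr {X G : Type*} [Monoid G] {T : X → X} {ψ : X → G} {α : Set (Set X)}
    (hψconst : ∀ a ∈ α, ∀ x ∈ a, ∀ y ∈ a, ψ x = ψ y)
    {n : ℕ} {x y : X} (h : ∀ j, j < n → ∃ a ∈ α, T^[j] x ∈ a ∧ T^[j] y ∈ a) :
    cocycle T ψ n x = cocycle T ψ n y := by
  induction n with
  | zero => rfl
  | succ n ih =>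
      obtain ⟨a, ha, hx, hy⟩ := h n (Nat.lt_succ_self n)
      rw [cocycle_succ', cocycle_succ', hψconst a ha _ hx _ hy,
        ih (fun j hj => h j (hj.trans (Nat.lt_succ_self n)))]

lemma exists_mem_cylinder_iterate {X : Type*} {T : X → X} {α : Set (Set X)}
    (hfb : ∀ a ∈ α, Set.BijOn T a Set.univ) :
    ∀ (n : ℕ) (a : Fin n → Set X), (∀ j, a j ∈ α) → ∀ y : X,
      ∃ x, (∀ j : Fin n, T^[(j : ℕ)] x ∈ a j) ∧ T^[n] x = y := by
  intro n
  induction n with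
  | zero => exact fun a _ y => ⟨y, fun j => j.elim0, rfl⟩
  | succ n ih =>
      intro a ha y
      obtain ⟨x', hx', hTx'⟩ := ih (fun j => a j.succ) (fun j => ha j.succ) y
      obtain ⟨x, hx, hTx⟩ := (hfb (a 0) (ha 0)).surjOn (Set.mem_univ x')
      refine ⟨x, ?_, ?_⟩
      · intro j
        refine Fin.cases ?_ ?_ j
        · simpa using hx
        · intro i
          have h2 : T^[(i : ℕ) + 1] x = T^[(i : ℕ)] x' := by
            rw [Function.iterate_succ_apply, hTx]
          simpa [Fin.val_succ, h2] using hx' i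
      · rw [Function.iterate_succ_apply, hTx, hTx']

lemma cylinder_concat {X : Type*} (T : X → X) (n m : ℕ) (a : Fin n → Set X)
    (b : Fin m → Set X) :
    ((⋂ j : Fin n, T^[(j : ℕ)] ⁻¹' a j) ∩ T^[n] ⁻¹' (⋂ j : Fin m, T^[(j : ℕ)] ⁻¹' b j)) =
      ⋂ j : Fin (n + m), T^[(j : ℕ)] ⁻¹' (Fin.append a b j) := by
  ext x
  simp only [Set.mem_inter_iff, Set.mem_iInter, Set.mem_preimage]
  constructor
  · rintro ⟨h1, h2⟩ j
    refine Fin.addCases (fun i => ?_) (fun i => ?_) j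
    · rw [Fin.append_left]
      exact h1 i
    · rw [Fin.append_right]
      have e1 : ((Fin.natAdd n i : Fin (n + m)) : ℕ) = (i : ℕ) + n := by
        simp [Fin.natAdd]; omega
      rw [e1, Function.iterate_add_apply]
      exact h2 i
  · intro h
    refine ⟨fun i => ?_, fun i => ?_⟩
    · have hi := h (Fin.castAdd m i)
      rwa [Fin.append_left] at hi
    · have hi := h (Fin.natAdd n i)
      rw [Fin.append_right] at hi
      rw [show ((Fin.natAdd n i : Fin (n + m)) : ℕ) = (i : ℕ) + n from by
        simp [Fin.natAdd]; omega, Function.iterate_add_apply] at hi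
      exact hi

lemma append_mem {X : Type*} {α : Set (Set X)} {n m : ℕ} {a : Fin n → Set X}
    {b : Fin m → Set X} (ha : ∀ j, a j ∈ α) (hb : ∀ j, b j ∈ α) :
    ∀ j, Fin.append a b j ∈ α := by
  intro j
  refine Fin.addCases (fun i => ?_) (fun i => ?_) j
  · rw [Fin.append_left]; exact ha i
  · rw [Fin.append_right]; exact hb i

lemma gibbs_cyl {X : Type*} [MetricSpace X] [MeasurableSpace X]
    {μ : MeasureTheory.Measure X} {T : X → X} {α : Set (Set X)} {φ : X → ℝ} {C : ℝ}
    (hg : ∀ n : ℕ, ∀ c ∈ cylinders T α (n + 1), ∀ x ∈ c,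
      (μ c).toReal / C ≤ Real.exp (birkhoff T φ (n + 1) x) ∧
      Real.exp (birkhoff T φ (n + 1) x) ≤ C * (μ c).toReal)
    {n : ℕ} (hn : 0 < n) {c : Set X} (hc : c ∈ cylinders T α n) {x : X} (hx : x ∈ c) :
    (μ c).toReal / C ≤ Real.exp (birkhoff T φ n x) ∧
      Real.exp (birkhoff T φ n x) ≤ C * (μ c).toReal := by
  obtain ⟨k, rfl⟩ : ∃ k, n = k + 1 := ⟨n - 1, by omega⟩
  exact hg k c hc x hx

lemma gibbs_product {X : Type*} [MetricSpace X] [MeasurableSpace X]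
    {μ : MeasureTheory.Measure X} {T : X → X} {α : Set (Set X)} {φ : X → ℝ}
    (hne : ∀ a ∈ α, a.Nonempty)
    (hfb : ∀ a ∈ α, Set.BijOn T a Set.univ) {C : ℝ} (hC : 0 < C)
    (hg : ∀ n : ℕ, ∀ c ∈ cylinders T α (n + 1), ∀ x ∈ c,
      (μ c).toReal / C ≤ Real.exp (birkhoff T φ (n + 1) x) ∧
      Real.exp (birkhoff T φ (n + 1) x) ≤ C * (μ c).toReal)
    {n m : ℕ} (hn : 0 < n) (hm : 0 < m)
    {a : Fin n → Set X} (ha : ∀ j, a j ∈ α) {b : Fin m → Set X} (hb : ∀ j, b j ∈ α) :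
    (μ (⋂ j : Fin n, T^[(j : ℕ)] ⁻¹' a j)).toReal *
        (μ (⋂ j : Fin m, T^[(j : ℕ)] ⁻¹' b j)).toReal / C ^ 3 ≤
      (μ ((⋂ j : Fin n, T^[(j : ℕ)] ⁻¹' a j) ∩
        T^[n] ⁻¹' (⋂ j : Fin m, T^[(j : ℕ)] ⁻¹' b j))).toReal := by
  classical
  set d : Fin (n + m) → Set X := Fin.append a b with hd_def
  have hd : ∀ j, d j ∈ α := append_mem ha hb
  have hconcat := cylinder_concat T n m a b
  -- get a point in the big cylinder
  obtain ⟨y₀, hy₀⟩ := hne (a ⟨0, hn⟩) (ha ⟨0, hn⟩)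
  obtain ⟨x, hxd, -⟩ := exists_mem_cylinder_iterate hfb (n + m) d hd y₀
  have hxd' : x ∈ ⋂ j : Fin (n + m), T^[(j : ℕ)] ⁻¹' d j := Set.mem_iInter.2 hxd
  have hxc : x ∈ (⋂ j : Fin n, T^[(j : ℕ)] ⁻¹' a j) ∩
      T^[n] ⁻¹' (⋂ j : Fin m, T^[(j : ℕ)] ⁻¹' b j) := by
    rw [hconcat]; exact hxd'
  obtain ⟨hx1, hx2⟩ := hxc
  have hx2' : T^[n] x ∈ ⋂ j : Fin m, T^[(j : ℕ)] ⁻¹' b j := hx2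
  -- cylinder memberships
  have hca : (⋂ j : Fin n, T^[(j : ℕ)] ⁻¹' a j) ∈ cylinders T α n := ⟨⟨x, hx1⟩, a, ha, rfl⟩
  have hcb : (⋂ j : Fin m, T^[(j : ℕ)] ⁻¹' b j) ∈ cylinders T α m := by
    obtain ⟨z, hz, -⟩ := exists_mem_cylinder_iterate hfb m b hb y₀
    exact ⟨⟨z, Set.mem_iInter.2 hz⟩, b, hb, rfl⟩
  have hcd : ((⋂ j : Fin n, T^[(j : ℕ)] ⁻¹' a j) ∩
      T^[n] ⁻¹' (⋂ j : Fin m, T^[(j : ℕ)] ⁻¹' b j)) ∈ cylinders T α (n + m) :=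
    ⟨⟨x, by rw [hconcat]; exact hxd'⟩, d, hd, hconcat⟩
  have h1 := gibbs_cyl hg hn hca hx1
  have h2 := gibbs_cyl hg hm hcb hx2'
  have h3 := gibbs_cyl hg (by omega : 0 < n + m) hcd (by rw [hconcat]; exact hxd')
  rw [birkhoff_add T φ n m x, Real.exp_add] at h3
  set u := Real.exp (birkhoff T φ n x) with hu
  set v := Real.exp (birkhoff T φ m (T^[n] x)) with hv
  have hu0 : 0 < u := Real.exp_pos _
  have hv0 : 0 < v := Real.exp_pos _
  set P := (μ (⋂ j : Fin n, T^[(j : ℕ)] ⁻¹' a j)).toReal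
  set Q := (μ (⋂ j : Fin m, T^[(j : ℕ)] ⁻¹' b j)).toReal
  set R := (μ ((⋂ j : Fin n, T^[(j : ℕ)] ⁻¹' a j) ∩
    T^[n] ⁻¹' (⋂ j : Fin m, T^[(j : ℕ)] ⁻¹' b j))).toReal
  have hP : P ≤ C * u := by
    have := h1.1
    rw [div_le_iff₀ hC] at this
    linarith [this]
  have hQ : Q ≤ C * v := by
    have := h2.1
    rw [div_le_iff₀ hC] at this
    linarith [this]
  have hR : u * v ≤ C * R := h3.2
  have hP0 : 0 ≤ P := ENNReal.toReal_nonneg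
  have hQ0 : 0 ≤ Q := ENNReal.toReal_nonneg
  rw [div_le_iff₀ (by positivity)]
  calc P * Q ≤ (C * u) * (C * v) := mul_le_mul hP hQ hQ0 (by positivity)
    _ = (C * C) * (u * v) := by ring
    _ ≤ (C * C) * (C * R) := mul_le_mul_of_nonneg_left hR (by positivity)
    _ = R * C ^ 3 := by ring

end Aux
/-- Exponential tails of the first return time `τ(x) = min{j>0 : ψ_j(x)=e}`
of the skew product over a finite group extension of a Gibbs–Markov map. -/
theorem return_time_exponential_tails
    {X : Type*} [MetricSpace X] [MeasurableSpace X] [BorelSpace X]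
    {G : Type*} [Group G] [Fintype G]
    {μ : Measure X} {T : X → X} {α : Set (Set X)} {φ : X → ℝ}
    (hGM : IsGibbsMarkov μ T α φ)
    {ψ : X → G}
    (hψconst : ∀ a ∈ α, ∀ x ∈ a, ∀ y ∈ a, ψ x = ψ y)
    (hhit : ∀ g : G, ∃ n : ℕ, 0 < μ {x | cocycle T ψ n x = g}) :
    ∃ C' > (0 : ℝ), ∃ lam ∈ Set.Ioo (0 : ℝ) 1, ∀ n : ℕ,
      (μ {x | ∀ j : ℕ, 0 < j → j ≤ n → cocycle T ψ j x ≠ 1}).toReal ≤ C' * lam ^ n := by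
  classical
  haveI := hGM.prob
  obtain ⟨C, hC, hg⟩ := hGM.gibbs
  -- choose the partition element containing each point
  have hmemα : ∀ x : X, ∃ a, a ∈ α ∧ x ∈ a := by
    intro x
    have hx : x ∈ ⋃₀ α := by rw [hGM.cover]; trivial
    simpa [Set.mem_sUnion] using hx
  choose E hEα hEmem using hmemα
  have hE_unique : ∀ a ∈ α, ∀ z ∈ a, E z = a := by
    intro a ha z hz
    by_contra hne
    exact Set.disjoint_left.1 (hGM.pairwiseDisjoint (hEα z) ha hne) (hEmem z) hz
  have hcyl_self : ∀ n (x : X), x ∈ cylOf T E n x :=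
    fun n x => Set.mem_iInter.2 fun j => hEmem _
  have hcyl_mem : ∀ n (x : X), cylOf T E n x ∈ cylinders T α n :=
    fun n x => ⟨⟨x, hcyl_self n x⟩, fun j => E (T^[(j : ℕ)] x), fun j => hEα _, rfl⟩
  have hcyl_eq : ∀ n (x z : X), z ∈ cylOf T E n x → cylOf T E n x = cylOf T E n z := by
    intro n x z hz
    have hj : ∀ j : Fin n, E (T^[(j : ℕ)] x) = E (T^[(j : ℕ)] z) := fun j =>
      (hE_unique _ (hEα (T^[(j : ℕ)] x)) _ (Set.mem_iInter.1 hz j)).symm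
    unfold cylOf
    exact Set.iInter_congr fun j => by rw [hj j]
  have hcoc_const : ∀ n (x z : X), z ∈ cylOf T E n x → ∀ k, k ≤ n →
      cocycle T ψ k z = cocycle T ψ k x := by
    intro n x z hz k hk
    apply cocycle_congr hψconst
    intro j hj
    exact ⟨E (T^[j] x), hEα _, Set.mem_iInter.1 hz ⟨j, lt_of_lt_of_le hj hk⟩, hEmem _⟩
  have hTmeas : ∀ j : ℕ, Measurable (T^[j]) := fun j => hGM.measurable_T.iterate j
  have hcyl_ms : ∀ n (x : X), MeasurableSet (cylOf T E n x) := fun n x =>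
    MeasurableSet.iInter fun j => (hGM.measurableSet _ (hEα _)).preimage (hTmeas _)
  have hcount : ∀ n, (cylinders T α n).Countable := by
    intro n
    have h1 : {f : Fin n → Set X | ∀ j, f j ∈ α}.Countable :=
      Set.countable_pi fun _ => hGM.countable
    refine Set.Countable.mono ?_
      (h1.image fun a : Fin n → Set X => ⋂ j : Fin n, T^[(j : ℕ)] ⁻¹' a j)
    rintro c ⟨-, a, ha, rfl⟩
    exact ⟨a, ha, rfl⟩
  have hle1 : ∀ s : Set X, (μ s).toReal ≤ 1 := by
    intro s
    simpa using ENNReal.toReal_mono ENNReal.one_ne_top (prob_le_one (μ := μ) (s := s))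
  set A : ℕ → Set X := fun n => {x | ∀ j : ℕ, 0 < j → j ≤ n → cocycle T ψ j x ≠ 1} with hA
  have hA_anti : ∀ {p q : ℕ}, p ≤ q → A q ⊆ A p :=
    fun {p q} h x hx j hj hjp => hx j hj (hjp.trans h)
  have hA_cyl : ∀ n (x : X), x ∈ A n → cylOf T E n x ⊆ A n := by
    intro n x hx z hz j hj hjn
    rw [hcoc_const n x z hz j hjn]
    exact hx j hj hjn
  have hA_union : ∀ n, A n = ⋃₀ (cylOf T E n '' A n) := by
    intro n
    apply Set.Subset.antisymm
    · exact fun x hx => ⟨cylOf T E n x, ⟨x, hx, rfl⟩, hcyl_self n x⟩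
    · rintro z ⟨-, ⟨x, hx, rfl⟩, hz⟩
      exact hA_cyl n x hx hz
  have hS_count : ∀ n, (cylOf T E n '' A n).Countable := fun n =>
    Set.Countable.mono (by rintro c ⟨x, -, rfl⟩; exact hcyl_mem n x) (hcount n)
  have hS_ms : ∀ n, ∀ c ∈ cylOf T E n '' A n, MeasurableSet c := by
    rintro n c ⟨x, -, rfl⟩
    exact hcyl_ms n x
  have hS_disj : ∀ n, (cylOf T E n '' A n).Pairwise Disjoint := by
    intro n c hc d hd hne
    obtain ⟨x, -, rfl⟩ := hc
    obtain ⟨y, -, rfl⟩ := hd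
    rw [Set.disjoint_left]
    intro z hzc hzd
    exact hne ((hcyl_eq n x z hzc).trans (hcyl_eq n y z hzd).symm)
  have hA_ms : ∀ n, MeasurableSet (A n) := by
    intro n
    rw [hA_union n]
    exact MeasurableSet.sUnion (hS_count n) (hS_ms n)
  -- for each g ≠ 1 there is a positive-measure cylinder on which the cocycle equals g⁻¹
  have hret : ∀ g : G, g ≠ 1 → ∃ (m : ℕ) (x : X), 0 < m ∧ cocycle T ψ m x = g⁻¹ ∧
      0 < μ (cylOf T E m x) := by
    intro g hg1
    obtain ⟨m, hm⟩ := hhit g⁻¹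
    rcases m with - | m
    · exfalso
      have hemp : {x : X | cocycle T ψ 0 x = g⁻¹} = ∅ := by
        ext x
        simp only [Set.mem_setOf_eq, Set.mem_empty_iff_false, iff_false]
        intro h
        rw [show cocycle T ψ 0 x = 1 from rfl] at h
        exact hg1 (inv_eq_one.mp h.symm)
      rw [hemp] at hm
      simp at hm
    · have hex : ∃ x ∈ {x : X | cocycle T ψ (m + 1) x = g⁻¹},
          μ (cylOf T E (m + 1) x) ≠ 0 := by
        by_contra hcon
        push_neg at hcon
        have h0 : μ (⋃₀ (cylOf T E (m + 1) '' {x : X | cocycle T ψ (m + 1) x = g⁻¹})) = 0 := by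
          rw [measure_sUnion_null_iff (Set.Countable.mono
            (by rintro c ⟨x, -, rfl⟩; exact hcyl_mem _ x) (hcount (m + 1)))]
          rintro c ⟨x, hx, rfl⟩
          exact hcon x hx
        have hsub : {x : X | cocycle T ψ (m + 1) x = g⁻¹} ⊆
            ⋃₀ (cylOf T E (m + 1) '' {x : X | cocycle T ψ (m + 1) x = g⁻¹}) :=
          fun x hx => ⟨_, ⟨x, hx, rfl⟩, hcyl_self _ x⟩
        exact absurd (le_antisymm (le_trans (measure_mono hsub) h0.le) zero_le)
          (ne_of_gt hm)
      obtain ⟨x, hx, hxpos⟩ := hex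
      exact ⟨m + 1, x, Nat.succ_pos m, hx, pos_iff_ne_zero.mpr hxpos⟩
  have hXne : Nonempty X := by
    obtain ⟨n₀, hn₀⟩ := hhit 1
    obtain ⟨x, -⟩ := nonempty_of_measure_ne_zero (ne_of_gt hn₀)
    exact ⟨x⟩
  choose! mfun xfun hmpos hcocret hpos using hret
  by_cases hGt : ∃ g : G, g ≠ 1
  swap
  · -- the trivial-group case
    push_neg at hGt
    refine ⟨1, one_pos, 1 / 2, ⟨by norm_num, by norm_num⟩, ?_⟩
    intro n
    show (μ (A n)).toReal ≤ 1 * (1 / 2) ^ n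
    rcases Nat.eq_zero_or_pos n with rfl | hn
    · simpa using hle1 (A 0)
    · have hsub : A n ⊆ (∅ : Set X) := by
        intro x hx
        exact absurd (hGt (cocycle T ψ 1 x)) (hx 1 one_pos hn)
      have h0 : μ (A n) = 0 := le_antisymm (le_trans (measure_mono hsub) (by simp)) zero_le
      rw [h0]
      positivity
  obtain ⟨g₀, hg₀⟩ := hGt
  set Γ : Finset G := Finset.univ.filter (fun g => g ≠ 1) with hΓ
  have hg₀Γ : g₀ ∈ Γ := by simp [hΓ, hg₀]
  have hΓne : Γ.Nonempty := ⟨g₀, hg₀Γ⟩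
  set K : ℕ := Γ.sup mfun with hKdef
  have hKge : ∀ g ∈ Γ, mfun g ≤ K := fun g hg => Finset.le_sup hg
  have hK1 : 1 ≤ K := le_trans (hmpos g₀ hg₀) (hKge g₀ hg₀Γ)
  set δ₀ : ℝ := Γ.inf' hΓne (fun g => (μ (cylOf T E (mfun g) (xfun g))).toReal / C ^ 3)
    with hδ₀def
  have hδ₀pos : 0 < δ₀ := by
    rw [hδ₀def, Finset.lt_inf'_iff]
    intro g hgΓ'
    have hgne : g ≠ 1 := by simpa [hΓ] using hgΓ'
    exact div_pos (ENNReal.toReal_pos (ne_of_gt (hpos g hgne)) (measure_ne_top μ _))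
      (by positivity)
  set δ : ℝ := min δ₀ (1 / 2) with hδdef
  have hδpos : 0 < δ := lt_min hδ₀pos (by norm_num)
  have hδhalf : δ ≤ 1 / 2 := min_le_right _ _
  set b : ℝ := 1 - δ with hbdef
  have hb0 : 0 < b := by rw [hbdef]; linarith
  have hb1 : b < 1 := by rw [hbdef]; linarith
  -- the key one-cylinder estimate
  have key : ∀ n : ℕ, 0 < n → ∀ x : X, x ∈ A n →
      μ (A (n + K) ∩ cylOf T E n x) + ENNReal.ofReal δ * μ (cylOf T E n x) ≤
        μ (cylOf T E n x) := by
    intro n hn x hx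
    set g : G := cocycle T ψ n x with hgdef
    have hgne : g ≠ 1 := hx n hn le_rfl
    have hgΓ : g ∈ Γ := by simp [hΓ, hgne]
    set c' : Set X := cylOf T E (mfun g) (xfun g) with hc'def
    have hcore : δ * (μ (cylOf T E n x)).toReal ≤
        (μ (cylOf T E n x ∩ T^[n] ⁻¹' c')).toReal := by
      have hgp := gibbs_product (μ := μ) (φ := φ) hGM.nonempty hGM.fullBranches hC hg hn
        (hmpos g hgne) (a := fun j : Fin n => E (T^[(j : ℕ)] x)) (fun j => hEα _)
        (b := fun j : Fin (mfun g) => E (T^[(j : ℕ)] (xfun g))) (fun j => hEα _)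
      have hδle : δ ≤ (μ c').toReal / C ^ 3 :=
        le_trans (min_le_left _ _) (Finset.inf'_le _ hgΓ)
      calc δ * (μ (cylOf T E n x)).toReal
          ≤ ((μ c').toReal / C ^ 3) * (μ (cylOf T E n x)).toReal :=
            mul_le_mul_of_nonneg_right hδle ENNReal.toReal_nonneg
        _ = (μ (cylOf T E n x)).toReal * (μ c').toReal / C ^ 3 := by ring
        _ ≤ (μ (cylOf T E n x ∩ T^[n] ⁻¹' c')).toReal := hgp
    have hofReal : ENNReal.ofReal δ * μ (cylOf T E n x) ≤
        μ (cylOf T E n x ∩ T^[n] ⁻¹' c') := by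
      have hfin1 : ENNReal.ofReal δ * μ (cylOf T E n x) ≠ ⊤ :=
        ENNReal.mul_ne_top ENNReal.ofReal_ne_top (measure_ne_top μ _)
      rw [← ENNReal.ofReal_toReal hfin1,
        ← ENNReal.ofReal_toReal (measure_ne_top μ (cylOf T E n x ∩ T^[n] ⁻¹' c'))]
      apply ENNReal.ofReal_le_ofReal
      rw [ENNReal.toReal_mul, ENNReal.toReal_ofReal hδpos.le]
      exact hcore
    have hmK : mfun g ≤ K := hKge g hgΓ
    have hdisj : Disjoint (A (n + K) ∩ cylOf T E n x) (cylOf T E n x ∩ T^[n] ⁻¹' c') := by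
      rw [Set.disjoint_left]
      rintro y ⟨hyA, hyc⟩ ⟨-, hyT⟩
      have h1 : cocycle T ψ n y = g := hcoc_const n x y hyc n le_rfl
      have h2 : cocycle T ψ (mfun g) (T^[n] y) = g⁻¹ := by
        rw [hcoc_const (mfun g) (xfun g) (T^[n] y) hyT (mfun g) le_rfl]
        exact hcocret g hgne
      have h3 : cocycle T ψ (n + mfun g) y = 1 := by
        rw [cocycle_add, h2, h1, inv_mul_cancel]
      exact hyA (n + mfun g) (by omega) (by omega) h3
    have hms2 : MeasurableSet (cylOf T E n x ∩ T^[n] ⁻¹' c') :=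
      (hcyl_ms n x).inter ((hcyl_ms _ _).preimage (hTmeas n))
    have hunion : μ (A (n + K) ∩ cylOf T E n x) + μ (cylOf T E n x ∩ T^[n] ⁻¹' c') ≤
        μ (cylOf T E n x) := by
      rw [← measure_union hdisj hms2]
      refine measure_mono ?_
      rintro y (⟨-, hy⟩ | ⟨hy, -⟩) <;> exact hy
    exact le_trans (add_le_add_right hofReal _) hunion
  -- the measure recursion
  have hrecE : ∀ n : ℕ, 0 < n →
      μ (A (n + K)) + ENNReal.ofReal δ * μ (A n) ≤ μ (A n) := by
    intro n hn
    have hsum : μ (A n) = ∑' c : ↥(cylOf T E n '' A n), μ (c : Set X) := by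
      conv_lhs => rw [hA_union n]
      exact measure_sUnion (hS_count n) (hS_disj n) (hS_ms n)
    have hcover : A (n + K) = ⋃ c ∈ cylOf T E n '' A n, A (n + K) ∩ c := by
      ext y
      simp only [Set.mem_iUnion, Set.mem_inter_iff, exists_prop]
      constructor
      · intro hy
        have hyn : y ∈ A n := hA_anti (Nat.le_add_right n K) hy
        exact ⟨cylOf T E n y, ⟨y, hyn, rfl⟩, hy, hcyl_self n y⟩
      · rintro ⟨c, -, hy, -⟩
        exact hy
    have hsumK : μ (A (n + K)) =
        ∑' c : ↥(cylOf T E n '' A n), μ (A (n + K) ∩ (c : Set X)) := by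
      conv_lhs => rw [hcover]
      exact measure_biUnion (hS_count n)
        (fun c hc d hd hne => ((hS_disj n) hc hd hne).mono
          Set.inter_subset_right Set.inter_subset_right)
        (fun c hc => (hA_ms (n + K)).inter (hS_ms n c hc))
    rw [hsumK, hsum, ← ENNReal.tsum_mul_left, ← ENNReal.tsum_add]
    refine ENNReal.tsum_le_tsum ?_
    rintro ⟨c, hc⟩
    obtain ⟨x, hx, hceq⟩ := hc
    subst hceq
    exact key n hn x hx
  have hf_anti : ∀ {p q : ℕ}, p ≤ q → (μ (A q)).toReal ≤ (μ (A p)).toReal :=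
    fun {p q} h => ENNReal.toReal_mono (measure_ne_top μ _) (measure_mono (hA_anti h))
  have hrec : ∀ n : ℕ, 0 < n → (μ (A (n + K))).toReal ≤ b * (μ (A n)).toReal := by
    intro n hn
    have h := ENNReal.toReal_mono (measure_ne_top μ (A n)) (hrecE n hn)
    rw [ENNReal.toReal_add (measure_ne_top μ _)
        (ENNReal.mul_ne_top ENNReal.ofReal_ne_top (measure_ne_top μ _)),
      ENNReal.toReal_mul, ENNReal.toReal_ofReal hδpos.le] at h
    rw [hbdef]
    linarith
  have hiter : ∀ j : ℕ, (μ (A (1 + j * K))).toReal ≤ b ^ j := by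
    intro j
    induction j with
    | zero => simpa using hle1 (A 1)
    | succ j ih =>
        have e : 1 + (j + 1) * K = (1 + j * K) + K := by ring
        rw [e]
        calc (μ (A ((1 + j * K) + K))).toReal ≤ b * (μ (A (1 + j * K))).toReal :=
              hrec _ (by omega)
          _ ≤ b * b ^ j := mul_le_mul_of_nonneg_left ih hb0.le
          _ = b ^ (j + 1) := by ring
  have hKR : (0 : ℝ) < (K : ℝ) := by exact_mod_cast hK1
  refine ⟨b⁻¹, by positivity, b ^ ((1 : ℝ) / K),
    ⟨Real.rpow_pos_of_pos hb0 _, Real.rpow_lt_one hb0.le hb1 (by positivity)⟩, ?_⟩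
  intro n
  show (μ (A n)).toReal ≤ b⁻¹ * (b ^ ((1 : ℝ) / K)) ^ n
  have hinv1 : (1 : ℝ) ≤ b⁻¹ := by
    calc (1 : ℝ) = b * b⁻¹ := (mul_inv_cancel₀ hb0.ne').symm
      _ ≤ 1 * b⁻¹ := mul_le_mul_of_nonneg_right hb1.le (inv_pos.mpr hb0).le
      _ = b⁻¹ := one_mul _
  have hlam : (b ^ ((1 : ℝ) / K)) ^ n = b ^ ((n : ℝ) / K) := by
    rw [← Real.rpow_natCast (b ^ ((1 : ℝ) / K)) n, ← Real.rpow_mul hb0.le]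
    congr 1
    ring
  rcases Nat.eq_zero_or_pos n with rfl | hn
  · calc (μ (A 0)).toReal ≤ 1 := hle1 _
      _ ≤ b⁻¹ * (b ^ ((1 : ℝ) / K)) ^ 0 := by simpa using hinv1
  · set j := (n - 1) / K with hjdef
    have hdm := Nat.div_mul_le_self (n - 1) K
    rw [← hjdef] at hdm
    have hjn : 1 + j * K ≤ n := by omega
    have hdam := Nat.div_add_mod (n - 1) K
    rw [← hjdef] at hdam
    have hmod := Nat.mod_lt (n - 1) (show 0 < K by omega)
    have hn'' : n ≤ K * j + K := by omega
    have hn' : n ≤ (j + 1) * K := by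
      calc n ≤ K * j + K := hn''
        _ = (j + 1) * K := by ring
    have hstep1 : (μ (A n)).toReal ≤ b ^ j := le_trans (hf_anti hjn) (hiter j)
    have hexp : (n : ℝ) / K - 1 ≤ (j : ℝ) := by
      have h1 : (n : ℝ) ≤ ((j : ℝ) + 1) * K := by exact_mod_cast hn'
      have h2 : (n : ℝ) / K ≤ (j : ℝ) + 1 := by
        rw [div_le_iff₀ hKR]
        linarith
      linarith
    have hstep2 : (b : ℝ) ^ j ≤ b ^ ((n : ℝ) / K - 1) := by
      rw [← Real.rpow_natCast b j]
      exact Real.rpow_le_rpow_of_exponent_ge hb0 hb1.le hexp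
    have hstep3 : b ^ ((n : ℝ) / K - 1) = b⁻¹ * b ^ ((n : ℝ) / K) := by
      rw [Real.rpow_sub hb0, Real.rpow_one]
      ring
    rw [hlam]
    calc (μ (A n)).toReal ≤ b ^ j := hstep1
      _ ≤ b ^ ((n : ℝ) / K - 1) := hstep2
      _ = b⁻¹ * b ^ ((n : ℝ) / K) := hstep3
end
end

section
/- Let (X,μ,T,α) be a Gibbs–Markov map with full branches in which every cylinder has positive μ-measure, G a countable discrete group with identity e, and ψ:X→G constant on each element of α with e∈ψ(X). Write μ^n(e)=μ({x∈X : ψ_n(x)=e}). Then the limit lim_{n→∞} (1/n)·log μ^n(e) exists and is finite (in particular it lies in [−∞,0] and is not −∞). -/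
open MeasureTheory Filter Topology Set
open scoped ENNReal

noncomputable section

section GMAux

variable {X : Type*} {G : Type*} [Group G]

/-- Raw cylinder sets. -/
def cylSet (T : X → X) {n : ℕ} (s : Fin n → Set X) : Set X :=
  ⋂ j : Fin n, T^[(j : ℕ)] ⁻¹' s j

lemma GM_cocycle_add (T : X → X) (ψ : X → G) (n : ℕ) :
    ∀ (m : ℕ) (x : X), cocycle T ψ (n + m) x = cocycle T ψ m (T^[n] x) * cocycle T ψ n x := by
  intro m
  induction m with
  | zero => intro x; simp [cocycle]
  | succ m ih =>
    intro x
    calc cocycle T ψ (n + (m + 1)) x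
        = ψ (T^[n + m] x) * cocycle T ψ (n + m) x := rfl
      _ = ψ (T^[m] (T^[n] x)) * (cocycle T ψ m (T^[n] x) * cocycle T ψ n x) := by
          rw [ih, add_comm n m, Function.iterate_add_apply]
      _ = cocycle T ψ (m + 1) (T^[n] x) * cocycle T ψ n x := by
          rw [← mul_assoc]; rfl

lemma GM_birkhoff_add (T : X → X) (φ : X → ℝ) (n m : ℕ) (x : X) :
    birkhoff T φ (n + m) x = birkhoff T φ n x + birkhoff T φ m (T^[n] x) := by
  unfold birkhoff
  rw [Finset.sum_range_add]
  congr 1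
  refine Finset.sum_congr rfl fun j _ => ?_
  rw [add_comm n j, Function.iterate_add_apply]

lemma GM_cocycle_one (T : X → X) (ψ : X → G) :
    ∀ (n : ℕ) (x : X), (∀ k < n, ψ (T^[k] x) = 1) → cocycle T ψ n x = 1 := by
  intro n
  induction n with
  | zero => intro x _; rfl
  | succ n ih =>
    intro x h
    show ψ (T^[n] x) * cocycle T ψ n x = 1
    rw [h n (lt_add_one n), ih x (fun k hk => h k (hk.trans (lt_add_one n))), one_mul]

variable {α : Set (Set X)} {T : X → X}

lemma GM_label_eq (hα : α.PairwiseDisjoint id) {n : ℕ} {s s' : Fin n → Set X}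
    (hs : ∀ j, s j ∈ α) (hs' : ∀ j, s' j ∈ α) {x : X}
    (hx : ∀ j : Fin n, T^[(j : ℕ)] x ∈ s j) (hx' : ∀ j : Fin n, T^[(j : ℕ)] x ∈ s' j) :
    s = s' := by
  funext j
  by_contra hj
  exact Set.disjoint_left.mp (hα (hs j) (hs' j) hj) (hx j) (hx' j)

lemma GM_cylSet_succ {n : ℕ} (s : Fin (n + 1) → Set X) :
    cylSet T s = s 0 ∩ T ⁻¹' cylSet T (fun j : Fin n => s j.succ) := by
  ext x
  simp only [cylSet, mem_iInter, mem_inter_iff, mem_preimage, Fin.forall_fin_succ,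
    Fin.val_zero, Function.iterate_zero_apply, Fin.val_succ, Function.iterate_succ_apply]

lemma GM_image (hfb : ∀ a ∈ α, Set.BijOn T a univ) :
    ∀ (n : ℕ) (s : Fin n → Set X), (∀ j, s j ∈ α) → (cylSet T s).Nonempty →
      T^[n] '' cylSet T s = univ := by
  intro n
  induction n with
  | zero =>
    intro s _ _
    simp [cylSet]
  | succ n ih =>
    intro s hs hne
    have hsplit := GM_cylSet_succ (T := T) s
    have hY : (cylSet T (fun j : Fin n => s j.succ)).Nonempty := by
      obtain ⟨x, hx⟩ := hne
      rw [hsplit] at hx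
      exact ⟨T x, hx.2⟩
    rw [hsplit, Function.iterate_succ, Set.image_comp, Set.image_inter_preimage]
    have hs0 : T '' s 0 = univ := eq_univ_of_univ_subset (hfb _ (hs 0)).surjOn
    rw [hs0, univ_inter]
    exact ih _ (fun j => hs j.succ) hY

lemma GM_cylSet_append {n m : ℕ} (s : Fin n → Set X) (t : Fin m → Set X) :
    cylSet T (Fin.append s t) = cylSet T s ∩ T^[n] ⁻¹' cylSet T t := by
  ext x
  simp only [cylSet, mem_iInter, mem_inter_iff, mem_preimage]
  constructor
  · intro h
    refine ⟨fun i => ?_, fun j => ?_⟩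
    · have := h (Fin.castAdd m i)
      rwa [Fin.append_left, Fin.coe_castAdd] at this
    · have := h (Fin.natAdd n j)
      rwa [Fin.append_right, Fin.coe_natAdd, add_comm n (j : ℕ),
        Function.iterate_add_apply] at this
  · rintro ⟨h1, h2⟩ k
    refine Fin.addCases (fun i => ?_) (fun j => ?_) k
    · rw [Fin.append_left, Fin.coe_castAdd]; exact h1 i
    · rw [Fin.append_right, Fin.coe_natAdd, add_comm n (j : ℕ),
        Function.iterate_add_apply]
      exact h2 j

lemma GM_cocycle_const {ψ : X → G} (hψ : ∀ a ∈ α, ∀ x ∈ a, ∀ y ∈ a, ψ x = ψ y) :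
    ∀ (n : ℕ) (s : Fin n → Set X), (∀ j, s j ∈ α) →
      ∀ x ∈ cylSet T s, ∀ y ∈ cylSet T s, cocycle T ψ n x = cocycle T ψ n y := by
  intro n
  induction n with
  | zero => intro _ _ _ _ _ _; rfl
  | succ n ih =>
    intro s hs x hx y hy
    have hx' : ∀ j : Fin n, T^[(j : ℕ)] x ∈ s j.castSucc := fun j => by
      have := (mem_iInter.mp hx) j.castSucc
      rwa [Fin.coe_castSucc] at this
    have hy' : ∀ j : Fin n, T^[(j : ℕ)] y ∈ s j.castSucc := fun j => by
      have := (mem_iInter.mp hy) j.castSucc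
      rwa [Fin.coe_castSucc] at this
    have h1 : cocycle T ψ n x = cocycle T ψ n y :=
      ih (fun j => s j.castSucc) (fun j => hs _) x (mem_iInter.mpr hx') y (mem_iInter.mpr hy')
    have hxl : T^[n] x ∈ s (Fin.last n) := by
      have := (mem_iInter.mp hx) (Fin.last n); rwa [Fin.val_last] at this
    have hyl : T^[n] y ∈ s (Fin.last n) := by
      have := (mem_iInter.mp hy) (Fin.last n); rwa [Fin.val_last] at this
    show ψ (T^[n] x) * cocycle T ψ n x = ψ (T^[n] y) * cocycle T ψ n y
    rw [h1, hψ _ (hs (Fin.last n)) _ hxl _ hyl]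

lemma GM_const_nonempty (hfb : ∀ a ∈ α, Set.BijOn T a univ) {a : Set X} (ha : a ∈ α)
    (hane : a.Nonempty) (n : ℕ) : ∃ x, ∀ k < n, T^[k] x ∈ a := by
  induction n with
  | zero => exact ⟨hane.some, fun k hk => absurd hk (Nat.not_lt_zero k)⟩
  | succ n ih =>
    obtain ⟨y, hy⟩ := ih
    obtain ⟨x, hxa, hTx⟩ := (hfb a ha).surjOn (mem_univ y)
    refine ⟨x, fun k hk => ?_⟩
    cases k with
    | zero => simpa using hxa
    | succ k =>
      rw [Function.iterate_succ_apply, hTx]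
      exact hy k (by omega)

variable [MeasurableSpace X]

lemma GM_cylSet_meas (hT : Measurable T) {n : ℕ} {s : Fin n → Set X}
    (hs : ∀ j, MeasurableSet (s j)) : MeasurableSet (cylSet T s) :=
  MeasurableSet.iInter fun j => (hT.iterate (j : ℕ)) (hs j)

/-- Cylinders with labels in `α` (as a subtype). -/
def cylA (T : X → X) (α : Set (Set X)) {n : ℕ} (s : Fin n → ↥α) : Set X :=
  cylSet T fun j => ((s j : Set X))

/-- The labels of nonempty `n`-cylinders on which the cocycle is identically `1`. -/
def goodCyl (T : X → X) (α : Set (Set X)) (ψ : X → G) (n : ℕ) : Set (Fin n → ↥α) :=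
  {s | (cylA T α s).Nonempty ∧ ∀ x ∈ cylA T α s, cocycle T ψ n x = 1}

end GMAux
/-- The limit `lim_n (1/n)·log μ^n(e)` exists and is finite
(it lies in `(−∞, 0]`). -/
theorem mun_log_limit_exists
    {X : Type*} [MetricSpace X] [MeasurableSpace X] [BorelSpace X]
    {G : Type*} [Group G] [Countable G]
    {μ : Measure X} {T : X → X} {α : Set (Set X)} {φ : X → ℝ}
    (hGM : IsGibbsMarkov μ T α φ)
    (hpos : ∀ n : ℕ, ∀ c ∈ cylinders T α n, 0 < μ c)
    {ψ : X → G}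
    (hψconst : ∀ a ∈ α, ∀ x ∈ a, ∀ y ∈ a, ψ x = ψ y)
    (he : ∃ x, ψ x = 1) :
    ∃ L : ℝ, L ≤ 0 ∧
      Tendsto (fun n : ℕ =>
        Real.log (μ {x | cocycle T ψ n x = (1 : G)}).toReal / n) atTop (𝓝 L) := by
  classical
  haveI := hGM.prob
  haveI : Countable ↥α := hGM.countable.to_subtype
  obtain ⟨C₀, hC₀pos, hgibbs₀⟩ := hGM.gibbs
  set C : ℝ := max C₀ 1 with hCdef
  have hC1 : (1 : ℝ) ≤ C := le_max_right _ _
  have hCpos : (0 : ℝ) < C := lt_of_lt_of_le one_pos hC1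
  have hgibbs : ∀ n : ℕ, ∀ c ∈ cylinders T α (n + 1), ∀ x ∈ c,
      (μ c).toReal / C ≤ Real.exp (birkhoff T φ (n + 1) x) ∧
      Real.exp (birkhoff T φ (n + 1) x) ≤ C * (μ c).toReal := by
    intro n c hc x hx
    obtain ⟨h1, h2⟩ := hgibbs₀ n c hc x hx
    exact ⟨le_trans (div_le_div_of_nonneg_left ENNReal.toReal_nonneg hC₀pos
        (le_max_left _ _)) h1,
      h2.trans (mul_le_mul_of_nonneg_right (le_max_left _ _) ENNReal.toReal_nonneg)⟩
  -- basic facts on cylinders with labels in α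
  have hlabel : ∀ {n : ℕ} (s t : Fin n → ↥α) (x : X),
      x ∈ cylA T α s → x ∈ cylA T α t → s = t := by
    intro n s t x hx hy
    have h := GM_label_eq (T := T) hGM.pairwiseDisjoint
      (fun j => (s j).2) (fun j => (t j).2) (mem_iInter.mp hx) (mem_iInter.mp hy)
    funext j
    exact Subtype.ext (congrFun h j)
  have hdisjA : ∀ {n : ℕ} (s t : Fin n → ↥α), s ≠ t →
      Disjoint (cylA T α s) (cylA T α t) := fun s t hst =>
    Set.disjoint_left.mpr fun x hx hx' => hst (hlabel _ _ x hx hx')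
  have hmeasCyl : ∀ {n : ℕ} (s : Fin n → ↥α), MeasurableSet (cylA T α s) := fun s =>
    GM_cylSet_meas hGM.measurable_T fun j => hGM.measurableSet _ (s j).2
  -- decomposition of the level sets into good cylinders
  have hdecomp : ∀ n : ℕ,
      {x | cocycle T ψ n x = (1 : G)} = ⋃ s ∈ goodCyl T α ψ n, cylA T α s := by
    intro n
    apply Subset.antisymm
    · intro x hx
      have hx' : cocycle T ψ n x = 1 := hx
      have hex : ∀ j : Fin n, ∃ a : ↥α, T^[(j : ℕ)] x ∈ (a : Set X) := by
        intro j
        have hmem : T^[(j : ℕ)] x ∈ ⋃₀ α := hGM.cover ▸ mem_univ _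
        obtain ⟨a, ha, hmema⟩ := hmem
        exact ⟨⟨a, ha⟩, hmema⟩
      choose s hsx using hex
      have hxmem : x ∈ cylA T α s := mem_iInter.mpr hsx
      refine mem_biUnion (⟨⟨x, hxmem⟩, fun y hy => ?_⟩ :
        s ∈ goodCyl T α ψ n) hxmem
      rw [GM_cocycle_const hψconst n (fun j => ((s j : Set X))) (fun j => (s j).2)
        y hy x hxmem, hx']
    · intro x hx
      obtain ⟨s, hs, hxs⟩ := mem_iUnion₂.mp hx
      exact hs.2 x hxs
  have hmeasA : ∀ n : ℕ, μ {x | cocycle T ψ n x = (1 : G)} =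
      ∑' s : goodCyl T α ψ n, μ (cylA T α s.1) := by
    intro n
    rw [hdecomp n]
    exact measure_biUnion (Set.to_countable _)
      (fun s _ t _ hst => hdisjA s t hst) (fun s _ => hmeasCyl s)
  -- supermultiplicativity
  set K : ℝ≥0∞ := ENNReal.ofReal (C ^ 3) with hKdef
  have hKne : K ≠ ⊤ := ENNReal.ofReal_ne_top
  have hsuper : ∀ n m : ℕ,
      μ {x | cocycle T ψ (n + 1) x = (1 : G)} * μ {x | cocycle T ψ (m + 1) x = (1 : G)}
        ≤ K * μ {x | cocycle T ψ ((n + 1) + (m + 1)) x = (1 : G)} := by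
    intro n m
    rw [hmeasA (n + 1), hmeasA (m + 1)]
    set f : goodCyl T α ψ (n + 1) × goodCyl T α ψ (m + 1) → Set X :=
      fun p => cylA T α p.1.1 ∩ T^[n + 1] ⁻¹' cylA T α p.2.1 with hfdef
    have key : ∀ p : goodCyl T α ψ (n + 1) × goodCyl T α ψ (m + 1),
        μ (cylA T α p.1.1) * μ (cylA T α p.2.1) ≤ K * μ (f p) := by
      rintro ⟨⟨s, hsne, hsone⟩, ⟨t, htne, htone⟩⟩
      have himg := GM_image hGM.fullBranches (n + 1) (fun j => ((s j : Set X)))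
        (fun j => (s j).2) hsne
      obtain ⟨y, hy⟩ := id htne
      have hyim : y ∈ T^[n + 1] '' cylA T α s := by rw [cylA] at *; rw [himg]; trivial
      obtain ⟨x, hxs, hxy⟩ := hyim
      have hxd : x ∈ cylA T α s ∩ T^[n + 1] ⁻¹' cylA T α t :=
        ⟨hxs, by rw [mem_preimage, hxy]; exact hy⟩
      have happ : cylSet T (Fin.append (fun j => ((s j : Set X))) (fun j => ((t j : Set X))))
          = cylA T α s ∩ T^[n + 1] ⁻¹' cylA T α t := GM_cylSet_append _ _
      have hdcyl : (cylA T α s ∩ T^[n + 1] ⁻¹' cylA T α t) ∈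
          cylinders T α ((n + 1) + (m + 1)) := by
        refine ⟨⟨x, hxd⟩,
          Fin.append (fun j => ((s j : Set X))) (fun j => ((t j : Set X))), ?_, ?_⟩
        · intro j
          refine Fin.addCases (fun i => ?_) (fun i => ?_) j
          · rw [Fin.append_left]; exact (s i).2
          · rw [Fin.append_right]; exact (t i).2
        · exact happ.symm
      have hscyl : cylA T α s ∈ cylinders T α (n + 1) :=
        ⟨hsne, fun j => ((s j : Set X)), fun j => (s j).2, rfl⟩
      have htcyl : cylA T α t ∈ cylinders T α (m + 1) :=
        ⟨htne, fun j => ((t j : Set X)), fun j => (t j).2, rfl⟩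
      obtain ⟨hd1, hd2⟩ := hgibbs ((n + 1) + m) _ hdcyl x hxd
      obtain ⟨hs1, _⟩ := hgibbs n _ hscyl x hxs
      obtain ⟨ht1, _⟩ := hgibbs m _ htcyl (T^[n + 1] x) hxd.2
      have hb : birkhoff T φ ((n + 1) + (m + 1)) x
          = birkhoff T φ (n + 1) x + birkhoff T φ (m + 1) (T^[n + 1] x) :=
        GM_birkhoff_add T φ (n + 1) (m + 1) x
      set vs := (μ (cylA T α s)).toReal
      set vt := (μ (cylA T α t)).toReal
      set vd := (μ (cylA T α s ∩ T^[n + 1] ⁻¹' cylA T α t)).toReal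
      have hvs : vs ≤ Real.exp (birkhoff T φ (n + 1) x) * C := (div_le_iff₀ hCpos).mp hs1
      have hvt : vt ≤ Real.exp (birkhoff T φ (m + 1) (T^[n + 1] x)) * C :=
        (div_le_iff₀ hCpos).mp ht1
      have hreal : vs * vt ≤ C ^ 3 * vd := by
        calc vs * vt ≤ (Real.exp (birkhoff T φ (n + 1) x) * C) *
              (Real.exp (birkhoff T φ (m + 1) (T^[n + 1] x)) * C) :=
            mul_le_mul hvs hvt ENNReal.toReal_nonneg (by positivity)
          _ = C ^ 2 * (Real.exp (birkhoff T φ (n + 1) x) *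
              Real.exp (birkhoff T φ (m + 1) (T^[n + 1] x))) := by ring
          _ = C ^ 2 * Real.exp (birkhoff T φ ((n + 1) + (m + 1)) x) := by
              rw [← Real.exp_add, ← hb]
          _ ≤ C ^ 2 * (C * vd) := by
              exact mul_le_mul_of_nonneg_left hd2 (by positivity)
          _ = C ^ 3 * vd := by ring
      have hfin1 : μ (cylA T α s) ≠ ⊤ := measure_ne_top μ _
      have hfin2 : μ (cylA T α t) ≠ ⊤ := measure_ne_top μ _
      have hfind : μ (cylA T α s ∩ T^[n + 1] ⁻¹' cylA T α t) ≠ ⊤ := measure_ne_top μ _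
      refine (ENNReal.toReal_le_toReal (ENNReal.mul_ne_top hfin1 hfin2)
        (ENNReal.mul_ne_top hKne hfind)).mp ?_
      rw [ENNReal.toReal_mul, ENNReal.toReal_mul, hKdef,
        ENNReal.toReal_ofReal (by positivity : (0 : ℝ) ≤ C ^ 3)]
      exact hreal
    have hdisjf : Pairwise (Function.onFun Disjoint f) := by
      rintro p q hpq
      refine Set.disjoint_left.mpr fun x hxp hxq => hpq ?_
      have h1 : p.1.1 = q.1.1 := hlabel _ _ x hxp.1 hxq.1
      have h2 : p.2.1 = q.2.1 := hlabel _ _ (T^[n + 1] x) hxp.2 hxq.2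
      exact Prod.ext (Subtype.ext h1) (Subtype.ext h2)
    have hmeasf : ∀ p, MeasurableSet (f p) := fun p =>
      (hmeasCyl _).inter ((hGM.measurable_T.iterate (n + 1)) (hmeasCyl _))
    have hsubf : ∀ p, f p ⊆ {x | cocycle T ψ ((n + 1) + (m + 1)) x = (1 : G)} := by
      rintro ⟨⟨s, hsne, hsone⟩, ⟨t, htne, htone⟩⟩ x hx
      show cocycle T ψ ((n + 1) + (m + 1)) x = 1
      rw [GM_cocycle_add T ψ (n + 1) (m + 1) x, hsone x hx.1, htone _ hx.2, one_mul]
    calc (∑' s : goodCyl T α ψ (n + 1), μ (cylA T α s.1)) *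
          (∑' t : goodCyl T α ψ (m + 1), μ (cylA T α t.1))
        = ∑' (s : goodCyl T α ψ (n + 1)) (t : goodCyl T α ψ (m + 1)),
            μ (cylA T α s.1) * μ (cylA T α t.1) := by
          rw [← ENNReal.tsum_mul_right]
          exact tsum_congr fun s => (ENNReal.tsum_mul_left).symm
      _ ≤ ∑' (s : goodCyl T α ψ (n + 1)) (t : goodCyl T α ψ (m + 1)), K * μ (f (s, t)) :=
          ENNReal.tsum_le_tsum fun s => ENNReal.tsum_le_tsum fun t => key (s, t)
      _ = ∑' p : goodCyl T α ψ (n + 1) × goodCyl T α ψ (m + 1), K * μ (f p) :=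
          (ENNReal.tsum_prod (f := fun s t => K * μ (f (s, t)))).symm
      _ = K * ∑' p : goodCyl T α ψ (n + 1) × goodCyl T α ψ (m + 1), μ (f p) :=
          ENNReal.tsum_mul_left
      _ = K * μ (⋃ p, f p) := by rw [measure_iUnion hdisjf hmeasf]
      _ ≤ K * μ {x | cocycle T ψ ((n + 1) + (m + 1)) x = (1 : G)} :=
          mul_le_mul_right (measure_mono (iUnion_subset hsubf)) K
  -- positivity
  obtain ⟨x₀, hx₀⟩ := he
  have hx₀mem : x₀ ∈ ⋃₀ α := hGM.cover ▸ mem_univ _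
  obtain ⟨a₀, ha₀, hx₀a⟩ := hx₀mem
  have hψa : ∀ y ∈ a₀, ψ y = 1 := fun y hy =>
    (hψconst a₀ ha₀ y hy x₀ hx₀a).trans hx₀
  have hposA : ∀ n : ℕ, 0 < μ {x | cocycle T ψ n x = (1 : G)} := by
    intro n
    obtain ⟨x, hx⟩ := GM_const_nonempty hGM.fullBranches ha₀ (hGM.nonempty _ ha₀) n
    have hcyl : (⋂ j : Fin n, T^[(j : ℕ)] ⁻¹' a₀) ∈ cylinders T α n :=
      ⟨⟨x, mem_iInter.mpr fun j => hx j j.isLt⟩, fun _ => a₀, fun _ => ha₀, rfl⟩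
    refine lt_of_lt_of_le (hpos n _ hcyl) (measure_mono ?_)
    intro y hy
    exact GM_cocycle_one T ψ n y fun k hk => hψa _ (mem_iInter.mp hy ⟨k, hk⟩)
  -- Fekete
  have hμfin : ∀ n : ℕ, μ {x | cocycle T ψ n x = (1 : G)} ≠ ⊤ := fun n => measure_ne_top μ _
  set v : ℕ → ℝ := fun n => (μ {x | cocycle T ψ n x = (1 : G)}).toReal with hvdef
  have hv0 : ∀ n, 0 < v n := fun n => ENNReal.toReal_pos (hposA n).ne' (hμfin n)
  have hv1 : ∀ n, v n ≤ 1 := fun n => by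
    simpa using ENNReal.toReal_mono ENNReal.one_ne_top prob_le_one
  have hlogv : ∀ n, Real.log (v n) ≤ 0 := fun n => Real.log_nonpos (hv0 n).le (hv1 n)
  have hlogC : 0 ≤ Real.log C := Real.log_nonneg hC1
  set u : ℕ → ℝ := fun n => 3 * Real.log C - Real.log (v n) with hudef
  have hu0 : ∀ n, 0 ≤ u n := fun n => by
    have := hlogv n; simp only [hudef]; linarith
  have hvmul : ∀ n m : ℕ, v (n + 1) * v (m + 1) ≤ C ^ 3 * v ((n + 1) + (m + 1)) := by
    intro n m
    have h := hsuper n m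
    have h2 := ENNReal.toReal_mono (ENNReal.mul_ne_top hKne (hμfin _)) h
    rwa [ENNReal.toReal_mul, ENNReal.toReal_mul, hKdef,
      ENNReal.toReal_ofReal (by positivity : (0 : ℝ) ≤ C ^ 3)] at h2
  have hsub : Subadditive u := by
    intro a b
    rcases Nat.eq_zero_or_pos a with rfl | ha
    · rw [Nat.zero_add]; linarith [hu0 0, hu0 b]
    rcases Nat.eq_zero_or_pos b with rfl | hb
    · rw [Nat.add_zero]; linarith [hu0 0, hu0 a]
    obtain ⟨n, rfl⟩ := Nat.exists_eq_succ_of_ne_zero ha.ne'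
    obtain ⟨m, rfl⟩ := Nat.exists_eq_succ_of_ne_zero hb.ne'
    have h := hvmul n m
    have l1 : Real.log (v (n + 1) * v (m + 1)) ≤ Real.log (C ^ 3 * v ((n + 1) + (m + 1))) :=
      Real.log_le_log (mul_pos (hv0 _) (hv0 _)) h
    rw [Real.log_mul (hv0 _).ne' (hv0 _).ne', Real.log_mul (by positivity) (hv0 _).ne',
      Real.log_pow] at l1
    simp only [hudef]
    push_cast at l1 ⊢
    linarith
  have hbdd : BddBelow (Set.range fun n : ℕ => u n / n) := by
    refine ⟨0, ?_⟩
    rintro x ⟨n, rfl⟩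
    exact div_nonneg (hu0 n) (Nat.cast_nonneg n)
  have hlim := hsub.tendsto_lim hbdd
  have hlimnn : 0 ≤ hsub.lim :=
    ge_of_tendsto hlim (Eventually.of_forall fun n => div_nonneg (hu0 n) (Nat.cast_nonneg n))
  refine ⟨-hsub.lim, by linarith, ?_⟩
  have hfun : ∀ n : ℕ, (3 * Real.log C) / (n : ℝ) - u n / n = Real.log (v n) / (n : ℝ) := by
    intro n
    rw [← sub_div]
    congr 1
    simp only [hudef]
    ring
  have htend : Tendsto (fun n : ℕ => (3 * Real.log C) / (n : ℝ) - u n / n) atTop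
      (𝓝 (0 - hsub.lim)) := (tendsto_const_div_atTop_nhds_zero_nat _).sub hlim
  rw [zero_sub] at htend
  exact htend.congr hfun
end
end
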